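/- Ladder lemma: Let 𝒜 be an abelian category and k ≥ 1. Suppose given objects Z, X₀, …, X_k, Y₀, …, Y_k of 𝒜 and morphisms f : Z → X₀, q_i : X_i → Y_i for 0 ≤ i ≤ k, p_i : X_{i−1} → X_i and r_i : Y_{i−1} → Y_i for 1 ≤ i ≤ k, such that (i) the sequence 0 → Z →f X₀ →q₀ Y₀ → 0 is exact, and (ii) for each 1 ≤ i ≤ k, q_i ∘ p_i = r_i ∘ q_{i−1} and the sequence 0 → X_{i−1} → X_i ⊕ Y_{i−1} → Y_i → 0 is exact, where the first map has components (p_i, q_{i−1}) and the second map has components (q_i, −r_i). Then Z is isomorphic to the kernel of the top rung q_k : X_k → Y_k. -/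
import Mathlib


open CategoryTheory CategoryTheory.Limits

namespace TS

/-- One step of the ladder: the kernel of `qi` is isomorphic to the kernel of `qj`. -/
lemma ladder_step {𝒜 : Type*} [Category 𝒜] [Abelian 𝒜] {Xi Xj Yi Yj : 𝒜}
    (p : Xi ⟶ Xj) (qi : Xi ⟶ Yi) (qj : Xj ⟶ Yj) (r : Yi ⟶ Yj)
    (hw : biprod.lift p qi ≫ biprod.desc qj (-r) = 0)
    (hse : (ShortComplex.mk (biprod.lift p qi) (biprod.desc qj (-r)) hw).ShortExact) :
    Nonempty (kernel qi ≅ kernel qj) := by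
  have hcomm : p ≫ qj = qi ≫ r := by
    have h := hw
    simp only [biprod.lift_desc, Preadditive.comp_neg] at h
    exact add_neg_eq_zero.mp h
  have hmono : Mono (biprod.lift p qi) := hse.mono_f
  have hK := hse.fIsKernel
  -- forward map
  have hφw : (kernel.ι qi ≫ p) ≫ qj = 0 := by
    rw [Category.assoc, hcomm, ← Category.assoc, kernel.condition, zero_comp]
  let φ : kernel qi ⟶ kernel qj := kernel.lift qj (kernel.ι qi ≫ p) hφw
  -- backward map
  have hbw : biprod.lift (kernel.ι qj) (0 : kernel qj ⟶ Yi) ≫ biprod.desc qj (-r) = 0 := by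
    simp [kernel.condition]
  obtain ⟨ψ', hψ'⟩ := KernelFork.IsLimit.lift' hK _ hbw
  dsimp at hψ'
  have hψ'q : ψ' ≫ qi = 0 := by
    have := congrArg (· ≫ (biprod.snd : Xj ⊞ Yi ⟶ Yi)) hψ'
    simpa using this
  let ψ : kernel qj ⟶ kernel qi := kernel.lift qi ψ' hψ'q
  refine ⟨⟨φ, ψ, ?_, ?_⟩⟩
  · -- φ ≫ ψ = 𝟙
    have h1 := congrArg (· ≫ (biprod.fst : Xj ⊞ Yi ⟶ Xj)) hψ'
    simp only [Category.assoc, biprod.lift_fst] at h1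
    rw [← cancel_mono (kernel.ι qi), ← cancel_mono (biprod.lift p qi)]
    apply biprod.hom_ext
    · simp [φ, ψ, h1]
    · simp [φ, ψ, hψ'q, kernel.condition]
  · -- ψ ≫ φ = 𝟙
    have h1 := congrArg (· ≫ (biprod.fst : Xj ⊞ Yi ⟶ Xj)) hψ'
    simp only [Category.assoc, biprod.lift_fst] at h1
    rw [← cancel_mono (kernel.ι qj)]
    simp [φ, ψ, h1]

/-- Ladder lemma: given a ladder of height `k ≥ 1` built from the exact sequence
`0 → Z → X₀ → Y₀ → 0` and, for each `0 ≤ i < k`, commuting squares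
`q (i+1) ∘ p i = r i ∘ q i` with exact sequences
`0 → Xᵢ → X_{i+1} ⊞ Yᵢ → Y_{i+1} → 0` (first map with components `(p i, q i)`,
second map with components `(q (i+1), -(r i))`), the object `Z` is isomorphic to
the kernel of the top rung `q k : X k ⟶ Y k`. -/
theorem ladder_kernel {𝒜 : Type*} [Category 𝒜] [Abelian 𝒜] (k : ℕ) (hk : 1 ≤ k)
    (Z : 𝒜) (X Y : ℕ → 𝒜) (q : ∀ i, X i ⟶ Y i)
    (p : ∀ i, X i ⟶ X (i + 1)) (r : ∀ i, Y i ⟶ Y (i + 1))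
    (f : Z ⟶ X 0) (hw₀ : f ≫ q 0 = 0)
    (hse₀ : (ShortComplex.mk f (q 0) hw₀).ShortExact)
    (hw : ∀ i, i < k → biprod.lift (p i) (q i) ≫ biprod.desc (q (i + 1)) (-(r i)) = 0)
    (hse : ∀ i, ∀ hi : i < k,
      (ShortComplex.mk (biprod.lift (p i) (q i)) (biprod.desc (q (i + 1)) (-(r i)))
        (hw i hi)).ShortExact) :
    Nonempty (Z ≅ kernel (q k)) := by
  -- base: Z ≅ kernel (q 0)
  have base : Z ≅ kernel (q 0) :=
    IsLimit.conePointUniqueUpToIso hse₀.fIsKernel (limit.isLimit _)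
  -- induction: kernel (q i) ≅ kernel (q k) for i ≤ k
  have main : ∀ i, i ≤ k → Nonempty (Z ≅ kernel (q i)) := by
    intro i
    induction i with
    | zero => intro _; exact ⟨base⟩
    | succ n ih =>
      intro hn
      obtain ⟨e⟩ := ih (Nat.le_of_succ_le hn)
      obtain ⟨e'⟩ := ladder_step (p n) (q n) (q (n+1)) (r n) (hw n hn) (hse n hn)
      exact ⟨e.trans e'⟩
  exact main k le_rfl

end TS
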